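/- Let Z be a fixed real n×k matrix, Π ∈ R^k, and for g = 1,…,G let (ε_{[g]}, η_{[g]}) be pairs of random vectors in R^{n_g}, independent across g, each component with mean zero and finite second moments; set Σ_g = E[ε_{[g]}ε_{[g]}ᵀ], Ω_g = E[η_{[g]}η_{[g]}ᵀ], Ξ_g = E[η_{[g]}ε_{[g]}ᵀ], let Σ be the block-diagonal matrix with blocks Σ_g, and define x = ZΠ + η ∈ R^n. Let P be a real symmetric n×n matrix and P̈ = P − B_P. Then E[xᵀP̈ε] = 0 and Var(xᵀP̈ε) = ΠᵀZᵀP̈ΣP̈ZΠ + Σ_{g≠h} [ tr(Ω_g P_{[g,h]} Σ_h P_{[h,g]}) + tr(Ξ_gᵀ P_{[g,h]} Ξ_hᵀ P_{[h,g]}) ]. -/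

import Mathlib

open Matrix MeasureTheory ProbabilityTheory BigOperators

/-- Index set of `n = n₁ + … + n_G` observations, grouped into `G` clusters. -/
abbrev ClusterIdx {G : ℕ} (ng : Fin G → ℕ) := Σ g : Fin G, Fin (ng g)

/-- The submatrix `A_{[g,h]}`: rows in cluster `g`, columns in cluster `h`. -/
def clusterSub {G : ℕ} {ng : Fin G → ℕ} (A : Matrix (ClusterIdx ng) (ClusterIdx ng) ℝ)
    (g h : Fin G) : Matrix (Fin (ng g)) (Fin (ng h)) ℝ :=
  Matrix.of fun i j => A ⟨g, i⟩ ⟨h, j⟩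

/-- The block-diagonal part `B_A` of a matrix. -/
def blockDiagPart {G : ℕ} {ng : Fin G → ℕ} (A : Matrix (ClusterIdx ng) (ClusterIdx ng) ℝ) :
    Matrix (ClusterIdx ng) (ClusterIdx ng) ℝ :=
  Matrix.of fun x y => if x.1 = y.1 then A x y else 0

/-- The cluster-`g` subvector `v_{[g]}` of a vector. -/
def clusterVec {G : ℕ} {ng : Fin G → ℕ} (v : ClusterIdx ng → ℝ) (g : Fin G) :
    Fin (ng g) → ℝ := fun i => v ⟨g, i⟩

/-- The covariance block `E[a_{[g]} b_{[g]}ᵀ]` of two random vectors. -/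
noncomputable def covBlock2 {Ω : Type*} [MeasurableSpace Ω] (μ : Measure Ω)
    {G : ℕ} {ng : Fin G → ℕ} (a b : Ω → ClusterIdx ng → ℝ) (g : Fin G) :
    Matrix (Fin (ng g)) (Fin (ng g)) ℝ :=
  Matrix.of fun i j => ∫ ω, a ω ⟨g, i⟩ * b ω ⟨g, j⟩ ∂μ

/-- The `n × n` block-diagonal covariance matrix `Σ` with blocks `Σ_g = E[ε_{[g]} ε_{[g]}ᵀ]`. -/
noncomputable def covMatrix {Ω : Type*} [MeasurableSpace Ω] (μ : Measure Ω)
    {G : ℕ} {ng : Fin G → ℕ} (ε : Ω → ClusterIdx ng → ℝ) :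
    Matrix (ClusterIdx ng) (ClusterIdx ng) ℝ :=
  Matrix.of fun x y => if x.1 = y.1 then ∫ ω, ε ω x * ε ω y ∂μ else 0


set_option linter.unusedSectionVars false
set_option linter.unusedVariables false
set_option maxHeartbeats 1000000

open scoped ENNReal

section CJAux
variable {Ω : Type*} [MeasurableSpace Ω] {μ : Measure Ω} [IsProbabilityMeasure μ]
variable {G : ℕ} {ng : Fin G → ℕ} {ε η : Ω → ClusterIdx ng → ℝ}

lemma integrable_mul_of_L2 {f g : Ω → ℝ} (hf : MemLp f 2 μ) (hg : MemLp g 2 μ) :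
    Integrable (fun ω => f ω * g ω) μ := by
  have h : (1 : ℝ≥0∞) / 1 = 1 / 2 + 1 / 2 := by
    rw [ENNReal.div_add_div_same]
    norm_num
    rw [ENNReal.div_self] <;> norm_num
  exact hf.integrable_mul hg

def pairRV (ε η : Ω → ClusterIdx ng → ℝ) (g : Fin G) :
    Ω → (Fin (ng g) → ℝ) × (Fin (ng g) → ℝ) :=
  fun ω => (clusterVec (ε ω) g, clusterVec (η ω) g)

def HIndep (μ : Measure Ω) (ε η : Ω → ClusterIdx ng → ℝ) : Prop :=
  iIndepFun
      (fun g ω => (clusterVec (ε ω) g, clusterVec (η ω) g)) μ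

lemma measurable_pairRV (hε : Measurable ε) (hη : Measurable η) (g : Fin G) :
    Measurable (pairRV ε η g) := by
  apply Measurable.prodMk <;>
  · apply measurable_pi_lambda
    intro i
    exact (measurable_pi_apply _).comp ‹_›

lemma HIndep.ind (h : HIndep μ ε η) :
    iIndepFun
      (pairRV ε η) μ := h

lemma memL2_cross (hmeasε : Measurable ε) (hmeasη : Measurable η) (hindep : HIndep μ ε η)
    (hmom2ε : ∀ x : ClusterIdx ng, Integrable (fun ω => (ε ω x) ^ 2) μ)
    (hmom2η : ∀ x : ClusterIdx ng, Integrable (fun ω => (η ω x) ^ 2) μ)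
    {x y : ClusterIdx ng} (hxy : x.1 ≠ y.1) :
    MemLp (fun ω => η ω x * ε ω y) 2 μ := by
  obtain ⟨g, i⟩ := x; obtain ⟨h, j⟩ := y
  replace hxy : g ≠ h := hxy
  have hmη : Measurable fun ω => η ω ⟨g,i⟩ := (measurable_pi_apply _).comp hmeasη
  have hmε : Measurable fun ω => ε ω ⟨h,j⟩ := (measurable_pi_apply _).comp hmeasε
  refine (memLp_two_iff_integrable_sq (hmη.mul hmε).aestronglyMeasurable).2 ?_
  have hI0 : IndepFun ((fun p => (p.2 i)^2) ∘ pairRV ε η g)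
      ((fun p => (p.1 j)^2) ∘ pairRV ε η h) μ :=
    (hindep.ind.indepFun hxy).comp (by fun_prop) (by fun_prop)
  have hI : IndepFun (fun ω => (η ω ⟨g,i⟩)^2) (fun ω => (ε ω ⟨h,j⟩)^2) μ := by
    exact hI0
  have h2 := hI.integrable_mul (hmom2η ⟨g,i⟩) (hmom2ε ⟨h,j⟩)
  have : (fun ω => (η ω ⟨g,i⟩ * ε ω ⟨h,j⟩)^2)
      = fun ω => (η ω ⟨g,i⟩)^2 * (ε ω ⟨h,j⟩)^2 := funext fun ω => by ring
  simp only [Pi.mul_apply]; rw [this]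
  exact h2

lemma split2 (hmeasε : Measurable ε) (hmeasη : Measurable η) (hindep : HIndep μ ε η)
    {g h : Fin G} (hgh : g ≠ h)
    (F : (Fin (ng g) → ℝ) × (Fin (ng g) → ℝ) → ℝ)
    (F' : (Fin (ng h) → ℝ) × (Fin (ng h) → ℝ) → ℝ)
    (hF : Measurable F) (hF' : Measurable F') :
    ∫ ω, F (pairRV ε η g ω) * F' (pairRV ε η h ω) ∂μ =
      (∫ ω, F (pairRV ε η g ω) ∂μ) * ∫ ω, F' (pairRV ε η h ω) ∂μ := by
  exact ((hindep.ind.indepFun hgh).comp hF hF').integral_fun_mul_eq_mul_integral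
    (hF.comp (measurable_pairRV hmeasε hmeasη g)).aestronglyMeasurable
    (hF'.comp (measurable_pairRV hmeasε hmeasη h)).aestronglyMeasurable

lemma split21 (hmeasε : Measurable ε) (hmeasη : Measurable η) (hindep : HIndep μ ε η)
    {g h m : Fin G} (hgm : g ≠ m) (hhm : h ≠ m)
    (F : ((Fin (ng g) → ℝ) × (Fin (ng g) → ℝ)) × ((Fin (ng h) → ℝ) × (Fin (ng h) → ℝ)) → ℝ)
    (F' : (Fin (ng m) → ℝ) × (Fin (ng m) → ℝ) → ℝ)
    (hF : Measurable F) (hF' : Measurable F') :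
    ∫ ω, F (pairRV ε η g ω, pairRV ε η h ω) * F' (pairRV ε η m ω) ∂μ =
      (∫ ω, F (pairRV ε η g ω, pairRV ε η h ω) ∂μ) * ∫ ω, F' (pairRV ε η m ω) ∂μ := by
  have h1 := (hindep.ind.indepFun_prodMk (fun g => measurable_pairRV hmeasε hmeasη g) g h m hgm hhm)
  exact (h1.comp hF hF').integral_fun_mul_eq_mul_integral
    (hF.comp ((measurable_pairRV hmeasε hmeasη g).prodMk
      (measurable_pairRV hmeasε hmeasη h))).aestronglyMeasurable
    (hF'.comp (measurable_pairRV hmeasε hmeasη m)).aestronglyMeasurable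

lemma split22 (hmeasε : Measurable ε) (hmeasη : Measurable η) (hindep : HIndep μ ε η)
    {g h g' h' : Fin G} (h1 : g ≠ g') (h2 : g ≠ h') (h3 : h ≠ g') (h4 : h ≠ h')
    (F : ((Fin (ng g) → ℝ) × (Fin (ng g) → ℝ)) × ((Fin (ng h) → ℝ) × (Fin (ng h) → ℝ)) → ℝ)
    (F' : ((Fin (ng g') → ℝ) × (Fin (ng g') → ℝ)) × ((Fin (ng h') → ℝ) × (Fin (ng h') → ℝ)) → ℝ)
    (hF : Measurable F) (hF' : Measurable F') :
    ∫ ω, F (pairRV ε η g ω, pairRV ε η h ω) * F' (pairRV ε η g' ω, pairRV ε η h' ω) ∂μ =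
      (∫ ω, F (pairRV ε η g ω, pairRV ε η h ω) ∂μ) *
        ∫ ω, F' (pairRV ε η g' ω, pairRV ε η h' ω) ∂μ := by
  have hmp := fun g => measurable_pairRV (ε := ε) (η := η) hmeasε hmeasη g
  have hI := hindep.ind.indepFun_prodMk_prodMk hmp g h g' h' h1 h2 h3 h4
  exact (hI.comp hF hF').integral_fun_mul_eq_mul_integral
    (hF.comp ((hmp g).prodMk (hmp h))).aestronglyMeasurable
    (hF'.comp ((hmp g').prodMk (hmp h'))).aestronglyMeasurable

end CJAux

section CJVals
variable {Ω : Type*} [MeasurableSpace Ω] {μ : Measure Ω} [IsProbabilityMeasure μ]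
variable {G : ℕ} {ng : Fin G → ℕ} {ε η : Ω → ClusterIdx ng → ℝ}
variable (hmeasε : Measurable ε) (hmeasη : Measurable η) (hindep : HIndep μ ε η)

include hmeasε hmeasη hindep

lemma Mηε {x y : ClusterIdx ng} (hxy : x.1 ≠ y.1)
    (hm : ∫ ω, ε ω y ∂μ = 0) : ∫ ω, η ω x * ε ω y ∂μ = 0 := by
  obtain ⟨g, i⟩ := x; obtain ⟨h, j⟩ := y
  have := split2 hmeasε hmeasη hindep hxy (fun p => p.2 i) (fun p => p.1 j)
    (by fun_prop) (by fun_prop)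
  simp only [pairRV, clusterVec] at this
  rw [this, hm, mul_zero]

lemma Mεε {y y' : ClusterIdx ng} (hyy : y.1 ≠ y'.1)
    (hm : ∫ ω, ε ω y' ∂μ = 0) : ∫ ω, ε ω y * ε ω y' ∂μ = 0 := by
  obtain ⟨g, i⟩ := y; obtain ⟨h, j⟩ := y'
  have := split2 hmeasε hmeasη hindep hyy (fun p => p.1 i) (fun p => p.1 j)
    (by fun_prop) (by fun_prop)
  simp only [pairRV, clusterVec] at this
  rw [this, hm, mul_zero]

lemma Mηη {x x' : ClusterIdx ng} (hxx : x.1 ≠ x'.1)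
    (hm : ∫ ω, η ω x' ∂μ = 0) : ∫ ω, η ω x * η ω x' ∂μ = 0 := by
  obtain ⟨g, i⟩ := x; obtain ⟨h, j⟩ := x'
  have := split2 hmeasε hmeasη hindep hxx (fun p => p.2 i) (fun p => p.2 j)
    (by fun_prop) (by fun_prop)
  simp only [pairRV, clusterVec] at this
  rw [this, hm, mul_zero]

end CJVals

section CJVals2
variable {Ω : Type*} [MeasurableSpace Ω] {μ : Measure Ω} [IsProbabilityMeasure μ]
variable {G : ℕ} {ng : Fin G → ℕ} {ε η : Ω → ClusterIdx ng → ℝ}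
variable (hmeasε : Measurable ε) (hmeasη : Measurable η) (hindep : HIndep μ ε η)
  (hmeanε : ∀ x : ClusterIdx ng, ∫ ω, ε ω x ∂μ = 0)
  (hmeanη : ∀ x : ClusterIdx ng, ∫ ω, η ω x ∂μ = 0)

include hmeasε hmeasη hindep hmeanε hmeanη

lemma M3 {x y : ClusterIdx ng} (z : ClusterIdx ng) (hxy : x.1 ≠ y.1) :
    ∫ ω, (η ω x * ε ω y) * ε ω z ∂μ = 0 := by
  obtain ⟨g, i⟩ := x; obtain ⟨h, j⟩ := y; obtain ⟨m, l⟩ := z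
  replace hxy : g ≠ h := hxy
  by_cases hc : m = g
  · subst hc
    rw [show (fun ω => (η ω ⟨m,i⟩ * ε ω ⟨h,j⟩) * ε ω ⟨m,l⟩)
        = fun ω => (η ω ⟨m,i⟩ * ε ω ⟨m,l⟩) * ε ω ⟨h,j⟩ from funext fun ω => by ring]
    have := split2 hmeasε hmeasη hindep hxy (fun p => p.2 i * p.1 l) (fun p => p.1 j)
      (by fun_prop) (by fun_prop)
    simp only [pairRV, clusterVec] at this
    rw [this, hmeanε ⟨h,j⟩, mul_zero]
  · rw [show (fun ω => (η ω ⟨g,i⟩ * ε ω ⟨h,j⟩) * ε ω ⟨m,l⟩)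
        = fun ω => (ε ω ⟨h,j⟩ * ε ω ⟨m,l⟩) * η ω ⟨g,i⟩ from funext fun ω => by ring]
    have := split21 hmeasε hmeasη hindep (Ne.symm hxy) hc
      (fun q => q.1.1 j * q.2.1 l) (fun p => p.2 i) (by fun_prop) (by fun_prop)
    simp only [pairRV, clusterVec] at this
    rw [this, hmeanη ⟨g,i⟩, mul_zero]

lemma M4 {x y x' y' : ClusterIdx ng} (hxy : x.1 ≠ y.1) (hxy' : x'.1 ≠ y'.1) :
    ∫ ω, (η ω x * ε ω y) * (η ω x' * ε ω y') ∂μ =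
      (if x.1 = x'.1 ∧ y.1 = y'.1 then
        (∫ ω, η ω x * η ω x' ∂μ) * ∫ ω, ε ω y * ε ω y' ∂μ else 0) +
      (if x.1 = y'.1 ∧ y.1 = x'.1 then
        (∫ ω, η ω x * ε ω y' ∂μ) * ∫ ω, η ω x' * ε ω y ∂μ else 0) := by
  obtain ⟨g, i⟩ := x; obtain ⟨h, j⟩ := y; obtain ⟨g', i'⟩ := x'; obtain ⟨h', j'⟩ := y'
  replace hxy : g ≠ h := hxy
  replace hxy' : g' ≠ h' := hxy'
  by_cases h1 : g = g'
  · subst h1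
    by_cases h2 : h = h'
    · subst h2
      rw [show (fun ω => (η ω ⟨g,i⟩ * ε ω ⟨h,j⟩) * (η ω ⟨g,i'⟩ * ε ω ⟨h,j'⟩))
          = fun ω => (η ω ⟨g,i⟩ * η ω ⟨g,i'⟩) * (ε ω ⟨h,j⟩ * ε ω ⟨h,j'⟩)
          from funext fun ω => by ring]
      have := split2 hmeasε hmeasη hindep hxy
        (fun p => p.2 i * p.2 i') (fun p => p.1 j * p.1 j') (by fun_prop) (by fun_prop)
      simp only [pairRV, clusterVec] at this
      rw [this]
      simp [hxy]
    · rw [show (fun ω => (η ω ⟨g,i⟩ * ε ω ⟨h,j⟩) * (η ω ⟨g,i'⟩ * ε ω ⟨h',j'⟩))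
          = fun ω => (ε ω ⟨h,j⟩ * ε ω ⟨h',j'⟩) * (η ω ⟨g,i⟩ * η ω ⟨g,i'⟩)
          from funext fun ω => by ring]
      have := split21 hmeasε hmeasη hindep (Ne.symm hxy) (Ne.symm hxy')
        (fun q => q.1.1 j * q.2.1 j') (fun p => p.2 i * p.2 i') (by fun_prop) (by fun_prop)
      simp only [pairRV, clusterVec] at this
      rw [this, Mεε hmeasε hmeasη hindep h2 (hmeanε _), zero_mul]
      simp [h2, hxy.symm]
  · by_cases h3 : g = h'
    · subst h3
      by_cases h4 : h = g'
      · subst h4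
        rw [show (fun ω => (η ω ⟨g,i⟩ * ε ω ⟨h,j⟩) * (η ω ⟨h,i'⟩ * ε ω ⟨g,j'⟩))
            = fun ω => (η ω ⟨g,i⟩ * ε ω ⟨g,j'⟩) * (η ω ⟨h,i'⟩ * ε ω ⟨h,j⟩)
            from funext fun ω => by ring]
        have := split2 hmeasε hmeasη hindep hxy
          (fun p => p.2 i * p.1 j') (fun p => p.2 i' * p.1 j) (by fun_prop) (by fun_prop)
        simp only [pairRV, clusterVec] at this
        rw [this]
        simp [h1, hxy]
      · rw [show (fun ω => (η ω ⟨g,i⟩ * ε ω ⟨h,j⟩) * (η ω ⟨g',i'⟩ * ε ω ⟨g,j'⟩))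
            = fun ω => (ε ω ⟨h,j⟩ * η ω ⟨g',i'⟩) * (η ω ⟨g,i⟩ * ε ω ⟨g,j'⟩)
            from funext fun ω => by ring]
        have := split21 hmeasε hmeasη hindep (Ne.symm hxy) (fun hh => h1 hh.symm)
          (fun q => q.1.1 j * q.2.2 i') (fun p => p.2 i * p.1 j') (by fun_prop) (by fun_prop)
        simp only [pairRV, clusterVec] at this
        rw [this]
        have hz : ∫ ω, ε ω (⟨h,j⟩ : ClusterIdx ng) * η ω ⟨g',i'⟩ ∂μ = 0 := by
          rw [show (fun ω => ε ω (⟨h,j⟩ : ClusterIdx ng) * η ω ⟨g',i'⟩)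
              = fun ω => η ω (⟨g',i'⟩ : ClusterIdx ng) * ε ω ⟨h,j⟩
              from funext fun ω => by ring]
          exact Mηε hmeasε hmeasη hindep (fun hh => h4 hh.symm) (hmeanε _)
        rw [hz, zero_mul]
        simp [h1, h4]
    · by_cases h5 : h = g'
      · subst h5
        rw [show (fun ω => (η ω ⟨g,i⟩ * ε ω ⟨h,j⟩) * (η ω ⟨h,i'⟩ * ε ω ⟨h',j'⟩))
            = fun ω => (η ω ⟨g,i⟩ * ε ω ⟨h',j'⟩) * (ε ω ⟨h,j⟩ * η ω ⟨h,i'⟩)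
            from funext fun ω => by ring]
        have := split21 hmeasε hmeasη hindep hxy (Ne.symm hxy')
          (fun q => q.1.2 i * q.2.1 j') (fun p => p.1 j * p.2 i') (by fun_prop) (by fun_prop)
        simp only [pairRV, clusterVec] at this
        rw [this, Mηε hmeasε hmeasη hindep h3 (hmeanε _), zero_mul]
        simp [h1, h3]
      · by_cases h6 : h = h'
        · subst h6
          rw [show (fun ω => (η ω ⟨g,i⟩ * ε ω ⟨h,j⟩) * (η ω ⟨g',i'⟩ * ε ω ⟨h,j'⟩))
              = fun ω => (η ω ⟨g,i⟩ * η ω ⟨g',i'⟩) * (ε ω ⟨h,j⟩ * ε ω ⟨h,j'⟩)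
              from funext fun ω => by ring]
          have := split21 hmeasε hmeasη hindep hxy (Ne.symm h5)
            (fun q => q.1.2 i * q.2.2 i') (fun p => p.1 j * p.1 j') (by fun_prop) (by fun_prop)
          simp only [pairRV, clusterVec] at this
          rw [this, Mηη hmeasε hmeasη hindep h1 (hmeanη _), zero_mul]
          simp [h1, h3]
        · have := split22 hmeasε hmeasη hindep h1 h3 h5 h6
            (fun q => q.1.2 i * q.2.1 j) (fun q => q.1.2 i' * q.2.1 j')
            (by fun_prop) (by fun_prop)
          simp only [pairRV, clusterVec] at this
          rw [this, Mηε hmeasε hmeasη hindep hxy (hmeanε _), zero_mul]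
          simp [h1, h3]

end CJVals2

section CJAlg
variable {G : ℕ} {ng : Fin G → ℕ}

lemma sum_clusterIdx (f : ClusterIdx ng → ℝ) :
    ∑ x : ClusterIdx ng, f x = ∑ g, ∑ i, f ⟨g, i⟩ := by
  rw [← Finset.univ_sigma_univ, Finset.sum_sigma]

lemma sumA (c : ClusterIdx ng → ℝ) (Q Cov : Matrix (ClusterIdx ng) (ClusterIdx ng) ℝ)
    (hQsym : ∀ x y, Q x y = Q y x) :
    ∑ x : ClusterIdx ng, ∑ y : ClusterIdx ng, ∑ x' : ClusterIdx ng, ∑ y' : ClusterIdx ng,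
      Q x y * Q x' y' * (c x * c x' * Cov y y') = c ⬝ᵥ (Q * Cov * Q).mulVec c := by
  simp only [dotProduct, Matrix.mulVec, Matrix.mul_apply, Finset.sum_mul, Finset.mul_sum]
  refine Finset.sum_congr rfl fun x _ => ?_
  rw [Finset.sum_comm]
  refine Finset.sum_congr rfl fun x' _ => ?_
  rw [Finset.sum_comm]
  refine Finset.sum_congr rfl fun y' _ => ?_
  refine Finset.sum_congr rfl fun y _ => ?_
  rw [hQsym x' y']
  ring

lemma collapse2 (g h : Fin G)
    (W : (g' : Fin G) → (h' : Fin G) → Fin (ng g') → Fin (ng h') → ℝ)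
    (hW : ∀ g' h' i' j', g' ≠ g ∨ h' ≠ h → W g' h' i' j' = 0) :
    (∑ g', ∑ i', ∑ h', ∑ j', W g' h' i' j') = ∑ i', ∑ j', W g h i' j' := by
  rw [Finset.sum_eq_single g
    (fun g' _ hg' => by
      simp only [show ∀ i' h' j', W g' h' i' j' = 0 from
        fun i' h' j' => hW g' h' i' j' (Or.inl hg'), Finset.sum_const_zero])
    (fun hg => absurd (Finset.mem_univ g) hg)]
  refine Finset.sum_congr rfl fun i' _ => ?_
  rw [Finset.sum_eq_single h
    (fun h' _ hh' => by
      simp only [show ∀ j', W g h' i' j' = 0 from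
        fun j' => hW g h' i' j' (Or.inr hh'), Finset.sum_const_zero])
    (fun hh => absurd (Finset.mem_univ h) hh)]

lemma sumB1 (P Q : Matrix (ClusterIdx ng) (ClusterIdx ng) ℝ)
    (hQ0 : ∀ x y : ClusterIdx ng, x.1 = y.1 → Q x y = 0)
    (hQP : ∀ x y : ClusterIdx ng, x.1 ≠ y.1 → Q x y = P x y)
    (Nf Mf : ClusterIdx ng → ClusterIdx ng → ℝ)
    (hNsym : ∀ x x', Nf x x' = Nf x' x) (hMsym : ∀ y y', Mf y y' = Mf y' y)
    (hPsym : ∀ x y : ClusterIdx ng, P x y = P y x) :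
    (∑ g, ∑ i, ∑ h, ∑ j, ∑ g', ∑ i', ∑ h', ∑ j',
      Q ⟨g,i⟩ ⟨h,j⟩ * Q ⟨g',i'⟩ ⟨h',j'⟩ *
        (if g = g' ∧ h = h' then Nf ⟨g,i⟩ ⟨g',i'⟩ * Mf ⟨h,j⟩ ⟨h',j'⟩ else 0)) =
    ∑ g : Fin G, ∑ h : Fin G, if g = h then 0 else
      ((Matrix.of fun i i' => Nf ⟨g,i⟩ ⟨g,i'⟩) * (Matrix.of fun i j => P ⟨g,i⟩ ⟨h,j⟩) *
       (Matrix.of fun j j' => Mf ⟨h,j⟩ ⟨h,j'⟩) * (Matrix.of fun j i => P ⟨h,j⟩ ⟨g,i⟩)).trace := by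
  refine Finset.sum_congr rfl fun g _ => ?_
  rw [Finset.sum_comm]
  refine Finset.sum_congr rfl fun h _ => ?_
  have key : ∀ (i : Fin (ng g)) (j : Fin (ng h)),
      (∑ g', ∑ i', ∑ h', ∑ j', Q ⟨g,i⟩ ⟨h,j⟩ * Q ⟨g',i'⟩ ⟨h',j'⟩ *
        (if g = g' ∧ h = h' then Nf ⟨g,i⟩ ⟨g',i'⟩ * Mf ⟨h,j⟩ ⟨h',j'⟩ else 0)) =
      ∑ i', ∑ j', Q ⟨g,i⟩ ⟨h,j⟩ * Q ⟨g,i'⟩ ⟨h,j'⟩ *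
        (Nf ⟨g,i⟩ ⟨g,i'⟩ * Mf ⟨h,j⟩ ⟨h,j'⟩) := by
    intro i j
    rw [collapse2 g h _ (fun g' h' i' j' hor => by
      rcases hor with hg' | hh'
      · simp [Ne.symm hg']
      · simp [Ne.symm hh'])]
    simp
  rw [Finset.sum_congr rfl fun i _ => Finset.sum_congr rfl fun j _ => key i j]
  by_cases hgh : g = h
  · subst hgh
    simp only [show ∀ (i j : Fin (ng g)), Q ⟨g,i⟩ ⟨g,j⟩ = 0 from fun i j => hQ0 _ _ rfl,
      zero_mul, mul_zero, Finset.sum_const_zero]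
    simp
  · rw [if_neg hgh]
    simp only [show ∀ (i : Fin (ng g)) (j : Fin (ng h)), Q ⟨g,i⟩ ⟨h,j⟩ = P ⟨g,i⟩ ⟨h,j⟩ from
      fun i j => hQP _ _ hgh]
    simp only [Matrix.trace, Matrix.diag, Matrix.mul_apply, Matrix.of_apply,
      Finset.sum_mul, Finset.mul_sum]
    refine ((Finset.sum_congr rfl fun i _ => Finset.sum_comm).trans ?_)
    refine (Finset.sum_comm.trans ?_)
    refine ((Finset.sum_congr rfl fun i' _ => Finset.sum_congr rfl fun i _ =>
      Finset.sum_comm).trans ?_)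
    refine ((Finset.sum_congr rfl fun i' _ => Finset.sum_comm).trans ?_)
    refine ((Finset.sum_congr rfl fun i' _ => Finset.sum_congr rfl fun j' _ =>
      Finset.sum_comm).trans ?_)
    refine Finset.sum_congr rfl fun i' _ => Finset.sum_congr rfl fun j' _ =>
      Finset.sum_congr rfl fun j _ => Finset.sum_congr rfl fun i _ => ?_
    rw [hNsym ⟨g,i⟩ ⟨g,i'⟩, hPsym ⟨g,i'⟩ ⟨h,j'⟩]
    ring

lemma sumB2 (P Q : Matrix (ClusterIdx ng) (ClusterIdx ng) ℝ)
    (hQ0 : ∀ x y : ClusterIdx ng, x.1 = y.1 → Q x y = 0)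
    (hQP : ∀ x y : ClusterIdx ng, x.1 ≠ y.1 → Q x y = P x y)
    (Kf : ClusterIdx ng → ClusterIdx ng → ℝ) :
    (∑ g, ∑ i, ∑ h, ∑ j, ∑ g', ∑ i', ∑ h', ∑ j',
      Q ⟨g,i⟩ ⟨h,j⟩ * Q ⟨g',i'⟩ ⟨h',j'⟩ *
        (if g = h' ∧ h = g' then Kf ⟨g,i⟩ ⟨h',j'⟩ * Kf ⟨g',i'⟩ ⟨h,j⟩ else 0)) =
    ∑ g : Fin G, ∑ h : Fin G, if g = h then 0 else
      (((Matrix.of fun a b => Kf ⟨g,b⟩ ⟨g,a⟩ : Matrix (Fin (ng g)) (Fin (ng g)) ℝ)) *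
       ((Matrix.of fun i j => P ⟨g,i⟩ ⟨h,j⟩ : Matrix (Fin (ng g)) (Fin (ng h)) ℝ)) *
       ((Matrix.of fun a b => Kf ⟨h,b⟩ ⟨h,a⟩ : Matrix (Fin (ng h)) (Fin (ng h)) ℝ)) *
       ((Matrix.of fun j i => P ⟨h,j⟩ ⟨g,i⟩ : Matrix (Fin (ng h)) (Fin (ng g)) ℝ))).trace := by
  refine Finset.sum_congr rfl fun g _ => ?_
  rw [Finset.sum_comm]
  refine Finset.sum_congr rfl fun h _ => ?_
  have key : ∀ (i : Fin (ng g)) (j : Fin (ng h)),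
      (∑ g', ∑ i', ∑ h', ∑ j', Q ⟨g,i⟩ ⟨h,j⟩ * Q ⟨g',i'⟩ ⟨h',j'⟩ *
        (if g = h' ∧ h = g' then Kf ⟨g,i⟩ ⟨h',j'⟩ * Kf ⟨g',i'⟩ ⟨h,j⟩ else 0)) =
      ∑ i', ∑ j', Q ⟨g,i⟩ ⟨h,j⟩ * Q ⟨h,i'⟩ ⟨g,j'⟩ *
        (Kf ⟨g,i⟩ ⟨g,j'⟩ * Kf ⟨h,i'⟩ ⟨h,j⟩) := by
    intro i j
    rw [collapse2 h g _ (fun g' h' i' j' hor => by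
      rcases hor with hg' | hh'
      · simp [Ne.symm hg']
      · simp [Ne.symm hh'])]
    simp
  rw [Finset.sum_congr rfl fun i _ => Finset.sum_congr rfl fun j _ => key i j]
  by_cases hgh : g = h
  · subst hgh
    simp only [show ∀ (i j : Fin (ng g)), Q ⟨g,i⟩ ⟨g,j⟩ = 0 from fun i j => hQ0 _ _ rfl,
      zero_mul, mul_zero, Finset.sum_const_zero]
    simp
  · rw [if_neg hgh]
    simp only [show ∀ (i : Fin (ng g)) (j : Fin (ng h)), Q ⟨g,i⟩ ⟨h,j⟩ = P ⟨g,i⟩ ⟨h,j⟩ from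
      fun i j => hQP _ _ hgh,
      show ∀ (i : Fin (ng h)) (j : Fin (ng g)), Q ⟨h,i⟩ ⟨g,j⟩ = P ⟨h,i⟩ ⟨g,j⟩ from
      fun i j => hQP _ _ (fun hh => hgh ((by exact hh : h = g)).symm)]
    simp only [Matrix.trace, Matrix.diag, Matrix.mul_apply, Matrix.of_apply,
      Finset.sum_mul, Finset.mul_sum]
    refine ((Finset.sum_congr rfl fun i _ => Finset.sum_congr rfl fun j _ =>
      Finset.sum_comm).trans ?_)
    refine ((Finset.sum_congr rfl fun i _ => Finset.sum_comm).trans ?_)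
    refine (Finset.sum_comm.trans ?_)
    refine ((Finset.sum_congr rfl fun j' _ => Finset.sum_congr rfl fun i _ =>
      Finset.sum_comm).trans ?_)
    refine ((Finset.sum_congr rfl fun j' _ => Finset.sum_comm).trans ?_)
    refine ((Finset.sum_congr rfl fun j' _ => Finset.sum_congr rfl fun i' _ =>
      Finset.sum_comm).trans ?_)
    refine Finset.sum_congr rfl fun j' _ => Finset.sum_congr rfl fun i' _ =>
      Finset.sum_congr rfl fun j _ => Finset.sum_congr rfl fun i _ => ?_
    ring

end CJAlg

/-- mean and variance of the cluster jackknife score, Theorems 2/3, `p = 1`: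
for `x = ZΠ + η` and `P̈ = P - B_P`, `E[xᵀ P̈ ε] = 0` and
`Var(xᵀ P̈ ε) = Πᵀ Zᵀ P̈ Σ P̈ Z Π + ∑_{g≠h} [tr(Ω_g P_{[g,h]} Σ_h P_{[h,g]})
  + tr(Ξ_gᵀ P_{[g,h]} Ξ_hᵀ P_{[h,g]})]`. -/
theorem cluster_jackknife_score_mean_and_variance
    {Ω : Type*} [MeasurableSpace Ω] (μ : Measure Ω) [IsProbabilityMeasure μ]
    {G : ℕ} (ng : Fin G → ℕ) {k : ℕ}
    (Z : Matrix (ClusterIdx ng) (Fin k) ℝ) (Pi0 : Fin k → ℝ)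
    (ε η : Ω → ClusterIdx ng → ℝ)
    (hmeasε : Measurable ε) (hmeasη : Measurable η)
    (hindep : iIndepFun
      (fun g ω => (clusterVec (ε ω) g, clusterVec (η ω) g)) μ)
    (hmeanε : ∀ x : ClusterIdx ng, ∫ ω, ε ω x ∂μ = 0)
    (hmeanη : ∀ x : ClusterIdx ng, ∫ ω, η ω x ∂μ = 0)
    (hmom2ε : ∀ x : ClusterIdx ng, Integrable (fun ω => (ε ω x) ^ 2) μ)
    (hmom2η : ∀ x : ClusterIdx ng, Integrable (fun ω => (η ω x) ^ 2) μ)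
    (P : Matrix (ClusterIdx ng) (ClusterIdx ng) ℝ) (hP : P.IsSymm) :
    (∫ ω, (Z.mulVec Pi0 + η ω) ⬝ᵥ (P - blockDiagPart P).mulVec (ε ω) ∂μ = 0) ∧
    variance (fun ω => (Z.mulVec Pi0 + η ω) ⬝ᵥ (P - blockDiagPart P).mulVec (ε ω)) μ =
      Z.mulVec Pi0 ⬝ᵥ
        ((P - blockDiagPart P) * covMatrix μ ε * (P - blockDiagPart P)).mulVec (Z.mulVec Pi0) +
      ∑ g : Fin G, ∑ h : Fin G, if g = h then 0 else
        ((covBlock2 μ η η g * clusterSub P g h * covBlock2 μ ε ε h * clusterSub P h g).trace +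
         ((covBlock2 μ η ε g)ᵀ * clusterSub P g h * (covBlock2 μ η ε h)ᵀ *
           clusterSub P h g).trace) := by
  classical
  have hindep' : HIndep μ ε η := hindep
  set c : ClusterIdx ng → ℝ := Z.mulVec Pi0 with hcdef
  set Q : Matrix (ClusterIdx ng) (ClusterIdx ng) ℝ := P - blockDiagPart P with hQdef
  have hQ0 : ∀ x y : ClusterIdx ng, x.1 = y.1 → Q x y = 0 := by
    intro x y hxy
    simp [hQdef, blockDiagPart, Matrix.sub_apply, hxy]
  have hQP : ∀ x y : ClusterIdx ng, x.1 ≠ y.1 → Q x y = P x y := by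
    intro x y hxy
    simp [hQdef, blockDiagPart, Matrix.sub_apply, hxy]
  have hPsym : ∀ x y : ClusterIdx ng, P x y = P y x := fun x y => hP.apply y x
  have hQsym : ∀ x y : ClusterIdx ng, Q x y = Q y x := by
    intro x y
    by_cases hxy : x.1 = y.1
    · rw [hQ0 x y hxy, hQ0 y x hxy.symm]
    · rw [hQP x y hxy, hQP y x (Ne.symm hxy), hPsym]
  have hε2 : ∀ x : ClusterIdx ng, MemLp (fun ω => ε ω x) 2 μ := fun x =>
    (memLp_two_iff_integrable_sq
      ((measurable_pi_apply x).comp hmeasε).aestronglyMeasurable).2 (hmom2ε x)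
  have hη2 : ∀ x : ClusterIdx ng, MemLp (fun ω => η ω x) 2 μ := fun x =>
    (memLp_two_iff_integrable_sq
      ((measurable_pi_apply x).comp hmeasη).aestronglyMeasurable).2 (hmom2η x)
  have hεI : ∀ x : ClusterIdx ng, Integrable (fun ω => ε ω x) μ := fun x =>
    (hε2 x).integrable one_le_two
  have hcross : ∀ {x y : ClusterIdx ng}, x.1 ≠ y.1 →
      MemLp (fun ω => η ω x * ε ω y) 2 μ := fun hxy =>
    memL2_cross hmeasε hmeasη hindep' hmom2ε hmom2η hxy
  have hMcov : ∀ y y' : ClusterIdx ng, ∫ ω, ε ω y * ε ω y' ∂μ = covMatrix μ ε y y' := by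
    intro y y'
    by_cases hc : y.1 = y'.1
    · simp [covMatrix, hc]
    · rw [Mεε hmeasε hmeasη hindep' hc (hmeanε y')]
      simp [covMatrix, hc]
  have hSrep : ∀ ω, (c + η ω) ⬝ᵥ Q.mulVec (ε ω)
      = ∑ x : ClusterIdx ng, ∑ y : ClusterIdx ng, (c x + η ω x) * (Q x y * ε ω y) := by
    intro ω
    simp [dotProduct, Matrix.mulVec, Finset.mul_sum]
  set f : ClusterIdx ng → ClusterIdx ng → Ω → ℝ :=
    fun x y ω => (c x + η ω x) * (Q x y * ε ω y) with hfdef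
  have hfrw : ∀ x y, f x y = fun ω => Q x y * (c x * ε ω y) + Q x y * (η ω x * ε ω y) :=
    fun x y => funext fun ω => by simp only [hfdef]; ring
  have hfL2 : ∀ x y, MemLp (f x y) 2 μ := by
    intro x y
    rw [hfrw]
    by_cases hxy : x.1 = y.1
    · rw [hQ0 x y hxy]
      simp only [zero_mul, add_zero, zero_add]
      exact memLp_const 0
    · exact (((hε2 y).const_mul (c x)).const_mul (Q x y)).add
        ((hcross hxy).const_mul (Q x y))
  have hfI : ∀ x y, Integrable (f x y) μ := fun x y => (hfL2 x y).integrable one_le_two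
  have hfint0 : ∀ x y, ∫ ω, f x y ω ∂μ = 0 := by
    intro x y
    by_cases hxy : x.1 = y.1
    · rw [hfrw, hQ0 x y hxy]
      simp
    · rw [hfrw x y,
        integral_add (((hεI y).const_mul (c x)).const_mul (Q x y))
          ((integrable_mul_of_L2 (hη2 x) (hε2 y)).const_mul (Q x y)),
        MeasureTheory.integral_const_mul, MeasureTheory.integral_const_mul, MeasureTheory.integral_const_mul, hmeanε y,
        Mηε hmeasε hmeasη hindep' hxy (hmeanε y)]
      simp
  have hrepfun : (fun ω => (c + η ω) ⬝ᵥ Q.mulVec (ε ω))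
      = fun ω => ∑ x : ClusterIdx ng, ∑ y : ClusterIdx ng, f x y ω :=
    funext fun ω => hSrep ω
  have hmean : ∫ ω, (c + η ω) ⬝ᵥ Q.mulVec (ε ω) ∂μ = 0 := by
    rw [hrepfun, integral_finset_sum _
      (fun x _ => integrable_finset_sum _ fun y _ => hfI x y)]
    refine Finset.sum_eq_zero fun x _ => ?_
    rw [integral_finset_sum _ fun y _ => hfI x y]
    exact Finset.sum_eq_zero fun y _ => hfint0 x y
  refine ⟨hmean, ?_⟩
  have hX2 : MemLp (fun ω => (c + η ω) ⬝ᵥ Q.mulVec (ε ω)) 2 μ := by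
    rw [hrepfun, show (fun ω => ∑ x : ClusterIdx ng, ∑ y : ClusterIdx ng, f x y ω)
      = ∑ x : ClusterIdx ng, ∑ y : ClusterIdx ng, f x y from funext fun ω => by
        simp [Finset.sum_apply]]
    exact memLp_finset_sum' _ fun x _ => memLp_finset_sum' _ fun y _ => hfL2 x y
  rw [variance_eq_sub hX2, hmean]
  have hsq : (fun ω => (c + η ω) ⬝ᵥ Q.mulVec (ε ω)) ^ 2
      = fun ω => ∑ x : ClusterIdx ng, ∑ y : ClusterIdx ng, ∑ x' : ClusterIdx ng,
          ∑ y' : ClusterIdx ng, f x y ω * f x' y' ω := by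
    funext ω
    simp only [Pi.pow_apply]
    rw [hSrep ω, sq, Finset.sum_mul]
    refine Finset.sum_congr rfl fun x _ => ?_
    rw [Finset.sum_mul]
    refine Finset.sum_congr rfl fun y _ => ?_
    rw [Finset.mul_sum]
    refine Finset.sum_congr rfl fun x' _ => ?_
    rw [Finset.mul_sum]
  rw [hsq]
  have hint4 : ∫ ω, (∑ x : ClusterIdx ng, ∑ y : ClusterIdx ng, ∑ x' : ClusterIdx ng,
        ∑ y' : ClusterIdx ng, f x y ω * f x' y' ω) ∂μ
      = ∑ x : ClusterIdx ng, ∑ y : ClusterIdx ng, ∑ x' : ClusterIdx ng,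
        ∑ y' : ClusterIdx ng, ∫ ω, f x y ω * f x' y' ω ∂μ := by
    rw [integral_finset_sum _ (fun x _ => integrable_finset_sum _ fun y _ =>
      integrable_finset_sum _ fun x' _ => integrable_finset_sum _ fun y' _ =>
        integrable_mul_of_L2 (hfL2 x y) (hfL2 x' y'))]
    refine Finset.sum_congr rfl fun x _ => ?_
    rw [integral_finset_sum _ (fun y _ => integrable_finset_sum _ fun x' _ =>
      integrable_finset_sum _ fun y' _ => integrable_mul_of_L2 (hfL2 x y) (hfL2 x' y'))]
    refine Finset.sum_congr rfl fun y _ => ?_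
    rw [integral_finset_sum _ (fun x' _ => integrable_finset_sum _ fun y' _ =>
      integrable_mul_of_L2 (hfL2 x y) (hfL2 x' y'))]
    refine Finset.sum_congr rfl fun x' _ => ?_
    rw [integral_finset_sum _ (fun y' _ => integrable_mul_of_L2 (hfL2 x y) (hfL2 x' y'))]
  rw [hint4]
  have hval : ∀ x y x' y' : ClusterIdx ng, ∫ ω, f x y ω * f x' y' ω ∂μ
      = Q x y * Q x' y' * (c x * c x' * ∫ ω, ε ω y * ε ω y' ∂μ)
      + Q x y * Q x' y' *
        ((if x.1 = x'.1 ∧ y.1 = y'.1 then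
            (∫ ω, η ω x * η ω x' ∂μ) * ∫ ω, ε ω y * ε ω y' ∂μ else 0) +
         (if x.1 = y'.1 ∧ y.1 = x'.1 then
            (∫ ω, η ω x * ε ω y' ∂μ) * ∫ ω, η ω x' * ε ω y ∂μ else 0)) := by
    intro x y x' y'
    by_cases hc1 : x.1 = y.1
    · rw [hfrw x y, hQ0 x y hc1]
      simp
    · by_cases hc2 : x'.1 = y'.1
      · rw [hfrw x' y', hQ0 x' y' hc2]
        simp
      · have hre : (fun ω => f x y ω * f x' y' ω) = fun ω =>
            (Q x y * Q x' y') * ((c x * c x') * (ε ω y * ε ω y')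
              + c x * ((η ω x' * ε ω y') * ε ω y)
              + c x' * ((η ω x * ε ω y) * ε ω y')
              + (η ω x * ε ω y) * (η ω x' * ε ω y')) := funext fun ω => by
          simp only [hfdef]; ring
        have ia : Integrable (fun ω => (c x * c x') * (ε ω y * ε ω y')) μ :=
          (integrable_mul_of_L2 (hε2 y) (hε2 y')).const_mul _
        have ib : Integrable (fun ω => c x * ((η ω x' * ε ω y') * ε ω y)) μ :=
          (integrable_mul_of_L2 (hcross hc2) (hε2 y)).const_mul _
        have ic : Integrable (fun ω => c x' * ((η ω x * ε ω y) * ε ω y')) μ :=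
          (integrable_mul_of_L2 (hcross hc1) (hε2 y')).const_mul _
        have id : Integrable (fun ω => (η ω x * ε ω y) * (η ω x' * ε ω y')) μ :=
          integrable_mul_of_L2 (hcross hc1) (hcross hc2)
        have iab : Integrable (fun ω => (c x * c x') * (ε ω y * ε ω y')
            + c x * ((η ω x' * ε ω y') * ε ω y)) μ := ia.add ib
        have iabc : Integrable (fun ω => (c x * c x') * (ε ω y * ε ω y')
            + c x * ((η ω x' * ε ω y') * ε ω y)
            + c x' * ((η ω x * ε ω y) * ε ω y')) μ := iab.add ic
        rw [hre, MeasureTheory.integral_const_mul, integral_add iabc id,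
          integral_add iab ic, integral_add ia ib,
          MeasureTheory.integral_const_mul, MeasureTheory.integral_const_mul, MeasureTheory.integral_const_mul,
          M3 hmeasε hmeasη hindep' hmeanε hmeanη y hc2,
          M3 hmeasε hmeasη hindep' hmeanε hmeanη y' hc1,
          M4 hmeasε hmeasη hindep' hmeanε hmeanη hc1 hc2]
        ring
  rw [Finset.sum_congr rfl fun x _ => Finset.sum_congr rfl fun y _ =>
    Finset.sum_congr rfl fun x' _ => Finset.sum_congr rfl fun y' _ => hval x y x' y']
  rw [show ((0:ℝ)^2) = 0 by norm_num, sub_zero]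
  simp only [Finset.sum_add_distrib]
  congr 1
  · refine (sumA c Q (Matrix.of fun a b => ∫ ω, ε ω a * ε ω b ∂μ) hQsym).trans ?_
    rw [show (Matrix.of fun a b => ∫ ω, ε ω a * ε ω b ∂μ) = covMatrix μ ε from
      Matrix.ext fun a b => hMcov a b]
  · -- the cluster-pair part
    have hNsym : ∀ x x' : ClusterIdx ng,
        (∫ ω, η ω x * η ω x' ∂μ) = ∫ ω, η ω x' * η ω x ∂μ := fun x x' => by
      rw [show (fun ω => η ω x * η ω x') = fun ω => η ω x' * η ω x
        from funext fun ω => mul_comm _ _]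
    have hMsym : ∀ y y' : ClusterIdx ng,
        (∫ ω, ε ω y * ε ω y' ∂μ) = ∫ ω, ε ω y' * ε ω y ∂μ := fun y y' => by
      rw [show (fun ω => ε ω y * ε ω y') = fun ω => ε ω y' * ε ω y
        from funext fun ω => mul_comm _ _]
    have hB1 := sumB1 P Q hQ0 hQP
      (fun x x' => ∫ ω, η ω x * η ω x' ∂μ) (fun y y' => ∫ ω, ε ω y * ε ω y' ∂μ)
      hNsym hMsym hPsym
    have hB2 := sumB2 P Q hQ0 hQP (fun x y => ∫ ω, η ω x * ε ω y ∂μ)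
    calc ∑ x : ClusterIdx ng, ∑ y : ClusterIdx ng, ∑ x' : ClusterIdx ng,
          ∑ y' : ClusterIdx ng, Q x y * Q x' y' *
            ((if x.1 = x'.1 ∧ y.1 = y'.1 then
                (∫ ω, η ω x * η ω x' ∂μ) * ∫ ω, ε ω y * ε ω y' ∂μ else 0) +
             (if x.1 = y'.1 ∧ y.1 = x'.1 then
                (∫ ω, η ω x * ε ω y' ∂μ) * ∫ ω, η ω x' * ε ω y ∂μ else 0))
        = (∑ x : ClusterIdx ng, ∑ y : ClusterIdx ng, ∑ x' : ClusterIdx ng,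
            ∑ y' : ClusterIdx ng, Q x y * Q x' y' *
              (if x.1 = x'.1 ∧ y.1 = y'.1 then
                (∫ ω, η ω x * η ω x' ∂μ) * ∫ ω, ε ω y * ε ω y' ∂μ else 0))
          + ∑ x : ClusterIdx ng, ∑ y : ClusterIdx ng, ∑ x' : ClusterIdx ng,
            ∑ y' : ClusterIdx ng, Q x y * Q x' y' *
              (if x.1 = y'.1 ∧ y.1 = x'.1 then
                (∫ ω, η ω x * ε ω y' ∂μ) * ∫ ω, η ω x' * ε ω y ∂μ else 0) := by
          simp only [mul_add, Finset.sum_add_distrib]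
      _ = _ := by
          simp only [sum_clusterIdx]
          rw [hB1, hB2]
          rw [← Finset.sum_add_distrib]
          refine Finset.sum_congr rfl fun g _ => ?_
          rw [← Finset.sum_add_distrib]
          refine Finset.sum_congr rfl fun h _ => ?_
          by_cases hgh : g = h
          · simp [hgh]
          · simp only [if_neg hgh]
            rfl
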